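/- Let β, β' ∈ V_1 ⊖ S_1. Then for all integers m, n, m', n' ≥ 0: ⟨β_{m,n}, β'_{m',n'}⟩ = 0 if m + n ≠ m' + n', and ⟨β_{m,n}, β'_{m',n'}⟩ = (−1)^{|n−n'|}·(L−1)^{m+n−|n−n'|}·⟨β, β'⟩ if m + n = m' + n', where ⟨·,·⟩ is the inner product of ℓ²(W). -/

import Mathlib

noncomputable section

open scoped ComplexInnerProductSpace

namespace UCoxMasa

/-- The universal Coxeter matrix on `Fin L`: all off-diagonal entries are `0` (representing ∞). -/
def Mat (L : ℕ) : CoxeterMatrix (Fin L) where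
  M := fun i j => if i = j then 1 else 0
  isSymm := by
    ext i j
    by_cases h : i = j <;> simp [Matrix.transpose, h, eq_comm]
  diagonal := fun i => by simp
  off_diagonal := fun i j h => by simp [h]

/-- The universal Coxeter group on `L` generators: free product of `L` copies of `ℤ/2ℤ`. -/
abbrev W (L : ℕ) : Type := (Mat L).Group

/-- The distinguished Coxeter system of `W L`. -/
def cs (L : ℕ) : CoxeterSystem (Mat L) (W L) := CoxeterMatrix.toCoxeterSystem (Mat L)

/-- The simple reflection associated to `i : Fin L`. -/
def σ {L : ℕ} (i : Fin L) : W L := (cs L).simple i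

/-- Word length on `W L` with respect to the generating set of simple reflections. -/
def len {L : ℕ} (w : W L) : ℕ := (cs L).length w

/-- The Hilbert space `ℓ²(W)`. -/
abbrev H (L : ℕ) : Type := lp (fun _ : W L => ℂ) 2

/-- The standard orthonormal basis vector `δ_w` of `ℓ²(W)`. -/
def δ {L : ℕ} (w : W L) : H L :=
  letI := Classical.decEq (W L)
  lp.single 2 w 1

/-- `V l`: the linear span of `{δ_w : ℓ(w) = l}`. -/
def V (L : ℕ) (l : ℕ) : Submodule ℂ (H L) :=
  Submodule.span ℂ {x : H L | ∃ w : W L, len w = l ∧ x = δ w}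

/-- `S_l`: the linear span of `q_l(h V_{l-1}) ∪ q_l(R_h V_{l-1})`,
given the projections `Q`, the operator `h` and the right operator `Rh`. -/
def Sl (L : ℕ) (Q : ℕ → (H L →L[ℂ] H L)) (h Rh : H L →L[ℂ] H L) (l : ℕ) :
    Submodule ℂ (H L) :=
  Submodule.span ℂ
    ({x : H L | ∃ y ∈ V L (l - 1), x = Q l (h y)} ∪
      {x : H L | ∃ y ∈ V L (l - 1), x = Q l (Rh y)})

end UCoxMasa


namespace UCoxMasa

section Aux

variable {L : ℕ}

abbrev Red (L : ℕ) : Type := {l : List (Fin L) // l.Chain' (· ≠ ·)}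

def act (i : Fin L) (l : Red L) : Red L :=
  if h : l.1.head? = some i then ⟨l.1.tail, l.2.tail⟩
  else ⟨i :: l.1, List.isChain_cons.2 ⟨fun b hb => fun hib => h (by rw [hb, hib]), l.2⟩⟩

lemma act_val_of_head (i : Fin L) (l : Red L) (h : l.1.head? = some i) :
    (act i l).1 = l.1.tail := by simp [act, h]

lemma act_val_of_not_head (i : Fin L) (l : Red L) (h : l.1.head? ≠ some i) :
    (act i l).1 = i :: l.1 := by simp [act, h]

lemma act_involutive (i : Fin L) : Function.Involutive (act i) := by
  intro l
  apply Subtype.ext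
  by_cases h : l.1.head? = some i
  · obtain ⟨l, hl⟩ := l
    cases l with
    | nil => simp at h
    | cons a t =>
      simp only [List.head?_cons, Option.some.injEq] at h
      subst h
      have h2 : (act a ⟨a :: t, hl⟩).1 = t := act_val_of_head a _ (by simp)
      have h3 : t.head? ≠ some a := by
        intro hc
        cases t with
        | nil => simp at hc
        | cons b t' =>
          simp only [List.head?_cons, Option.some.injEq] at hc
          exact (List.isChain_cons_cons.1 hl).1 hc.symm
      have h4 : (act a (act a ⟨a :: t, hl⟩)).1 = a :: (act a ⟨a :: t, hl⟩).1 :=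
        act_val_of_not_head a _ (by rw [h2]; exact h3)
      rw [h4, h2]
  · have h1 : (act i (act i l)).1 = (act i l).1.tail :=
      act_val_of_head i _ (by rw [act_val_of_not_head i l h]; rfl)
    rw [h1, act_val_of_not_head i l h]
    rfl

def actPerm (i : Fin L) : Equiv.Perm (Red L) := (act_involutive i).toPerm

lemma actPerm_liftable : CoxeterMatrix.IsLiftable (Mat L) (actPerm (L := L)) := by
  intro i j
  by_cases h : i = j
  · subst h
    have : (Mat L).M i i = 1 := by simp [Mat]
    rw [this, pow_one]
    apply Equiv.ext
    intro l
    rw [Equiv.Perm.mul_apply]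
    exact act_involutive i l
  · have : (Mat L).M i j = 0 := by simp [Mat, h]
    rw [this, pow_zero]

def nf (L : ℕ) : W L →* Equiv.Perm (Red L) := (cs L).lift ⟨actPerm, actPerm_liftable⟩

lemma nf_simple (i : Fin L) : nf L ((cs L).simple i) = actPerm i :=
  (cs L).lift_apply_simple actPerm_liftable i

def emptyRed : Red L := ⟨[], List.isChain_nil⟩

/-- The normal form word of a group element. -/
def ρ (w : W L) : List (Fin L) := (nf L w emptyRed).1

lemma chain'_ρ (w : W L) : (ρ w).Chain' (· ≠ ·) := (nf L w emptyRed).2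

lemma ρ_wordProd_chain : ∀ l : List (Fin L), l.Chain' (· ≠ ·) → ρ ((cs L).wordProd l) = l := by
  intro l hl
  induction l with
  | nil => simp [ρ, CoxeterSystem.wordProd_nil, emptyRed]
  | cons i t ih =>
    have ht := ih hl.tail
    rw [CoxeterSystem.wordProd_cons]
    show (nf L ((cs L).simple i * (cs L).wordProd t) emptyRed).1 = i :: t
    rw [map_mul, Equiv.Perm.mul_apply, nf_simple]
    show (act i (nf L ((cs L).wordProd t) emptyRed)).1 = i :: t
    have hv : (nf L ((cs L).wordProd t) emptyRed).1 = t := ht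
    rw [act_val_of_not_head, hv]
    rw [hv]
    intro hc
    cases t with
    | nil => simp at hc
    | cons b t' =>
      simp only [List.head?_cons, Option.some.injEq] at hc
      exact (List.isChain_cons_cons.1 hl).1 hc.symm

lemma wordProd_act (i : Fin L) (x : Red L) :
    (cs L).wordProd ((act i x).1) = (cs L).simple i * (cs L).wordProd x.1 := by
  by_cases h : x.1.head? = some i
  · rw [act_val_of_head i x h]
    obtain ⟨l, hl⟩ := x
    cases l with
    | nil => simp at h
    | cons a t =>
      simp only [List.head?_cons, Option.some.injEq] at h
      subst h
      simp only [List.tail_cons, CoxeterSystem.wordProd_cons]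
      rw [← mul_assoc, CoxeterSystem.simple_mul_simple_self, one_mul]
  · rw [act_val_of_not_head i x h, CoxeterSystem.wordProd_cons]

lemma wordProd_nf_apply (w : W L) (x : Red L) :
    (cs L).wordProd ((nf L w x).1) = w * (cs L).wordProd x.1 := by
  obtain ⟨ω, rfl⟩ := (cs L).wordProd_surjective w
  induction ω with
  | nil => simp
  | cons i t ih =>
    rw [CoxeterSystem.wordProd_cons, map_mul, Equiv.Perm.mul_apply, nf_simple]
    show (cs L).wordProd ((act i (nf L ((cs L).wordProd t) x)).1) = _
    rw [wordProd_act, ih, mul_assoc]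

lemma wordProd_ρ (w : W L) : (cs L).wordProd (ρ w) = w := by
  have := wordProd_nf_apply w emptyRed
  simpa [emptyRed, ρ] using this

lemma length_act_le (i : Fin L) (x : Red L) : ((act i x).1).length ≤ x.1.length + 1 := by
  by_cases h : x.1.head? = some i
  · rw [act_val_of_head i x h]
    rw [List.length_tail]
    omega
  · rw [act_val_of_not_head i x h]
    simp

lemma length_ρ_wordProd_le (ω : List (Fin L)) : (ρ ((cs L).wordProd ω)).length ≤ ω.length := by
  induction ω with
  | nil => simp [ρ, emptyRed]
  | cons i t ih =>
    rw [CoxeterSystem.wordProd_cons]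
    show ((nf L ((cs L).simple i * (cs L).wordProd t)) emptyRed).1.length ≤ t.length + 1
    rw [map_mul, Equiv.Perm.mul_apply, nf_simple]
    calc ((act i (nf L ((cs L).wordProd t) emptyRed)).1).length
        ≤ (nf L ((cs L).wordProd t) emptyRed).1.length + 1 := length_act_le i _
      _ ≤ t.length + 1 := Nat.add_le_add_right ih 1

lemma len_eq_ρ_length (w : W L) : len w = (ρ w).length := by
  apply le_antisymm
  · conv_lhs => rw [show w = (cs L).wordProd (ρ w) from (wordProd_ρ w).symm]
    exact (cs L).length_wordProd_le (ρ w)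
  · obtain ⟨ω, hω1, hω2⟩ := (cs L).exists_reduced_word w
    calc (ρ w).length = (ρ ((cs L).wordProd ω)).length := by rw [← hω2]
      _ ≤ ω.length := length_ρ_wordProd_le ω
      _ = len w := by rw [hω2]; exact hω1.symm

lemma len_wordProd_chain (l : List (Fin L)) (hl : l.Chain' (· ≠ ·)) :
    len ((cs L).wordProd l) = l.length := by
  rw [len_eq_ρ_length, ρ_wordProd_chain l hl]

lemma σ_injective : Function.Injective (σ (L := L)) := by
  intro i j hij
  have h1 : ρ (σ i) = [i] := by
    have := ρ_wordProd_chain [i] (List.isChain_singleton i)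
    simpa [σ] using this
  have h2 : ρ (σ j) = [j] := by
    have := ρ_wordProd_chain [j] (List.isChain_singleton j)
    simpa [σ] using this
  have := h1 ▸ h2 ▸ congrArg ρ hij
  simpa using this

lemma wordProd_chain_injOn {a b : List (Fin L)} (ha : a.Chain' (· ≠ ·)) (hb : b.Chain' (· ≠ ·))
    (h : (cs L).wordProd a = (cs L).wordProd b) : a = b := by
  rw [← ρ_wordProd_chain a ha, ← ρ_wordProd_chain b hb, h]

lemma len_simple (i : Fin L) : len (σ i) = 1 := (cs L).length_simple i

-- ## Chains finset

def chainsF (L : ℕ) : ℕ → Finset (List (Fin L))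
  | 0 => {[]}
  | n+1 => Finset.univ.biUnion fun i =>
      ((chainsF L n).filter fun l => l.head? ≠ some i).image (List.cons i)

lemma mem_chainsF {n : ℕ} {l : List (Fin L)} :
    l ∈ chainsF L n ↔ l.length = n ∧ l.Chain' (· ≠ ·) := by
  induction n generalizing l with
  | zero =>
    simp only [chainsF, Finset.mem_singleton]
    constructor
    · rintro rfl; simp; exact List.isChain_nil
    · rintro ⟨h, -⟩; exact List.eq_nil_of_length_eq_zero h
  | succ n ih =>
    simp only [chainsF, Finset.mem_biUnion, Finset.mem_image, Finset.mem_filter, Finset.mem_univ,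
      true_and]
    constructor
    · rintro ⟨i, t, ⟨ht, hh⟩, rfl⟩
      obtain ⟨ht1, ht2⟩ := ih.1 ht
      refine ⟨by simp [ht1], List.isChain_cons.2 ⟨fun b hb hib => hh (by rw [hb, hib]), ht2⟩⟩
    · rintro ⟨hlen, hch⟩
      cases l with
      | nil => simp at hlen
      | cons i t =>
        refine ⟨i, t, ⟨ih.2 ⟨by simpa using hlen, (List.isChain_cons.1 hch).2⟩, ?_⟩, rfl⟩
        intro hc
        cases t with
        | nil => simp at hc
        | cons b t' =>
          simp only [List.head?_cons, Option.some.injEq] at hc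
          exact (List.isChain_cons_cons.1 hch).1 hc.symm

lemma chainsF_succ_sum {M : Type*} [AddCommMonoid M] (n : ℕ) (f : List (Fin L) → M) :
    ∑ l ∈ chainsF L (n+1), f l
      = ∑ i : Fin L, ∑ t ∈ (chainsF L n).filter (fun l => l.head? ≠ some i), f (i :: t) := by
  rw [show chainsF L (n+1) = Finset.univ.biUnion fun i =>
      ((chainsF L n).filter fun l => l.head? ≠ some i).image (List.cons i) from rfl]
  rw [Finset.sum_biUnion]
  · congr 1
    funext i
    rw [Finset.sum_image]
    intro a _ b _ hab
    exact (List.cons_injective hab)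
  · intro i _ j _ hij
    simp only [Finset.disjoint_left, Finset.mem_image, Finset.mem_filter]
    rintro a ⟨t, _, rfl⟩ ⟨t', _, hc⟩
    exact hij (by injection hc with h1 _; exact h1.symm ▸ rfl)

/-- position function -/
def pos (l : List (Fin L)) (k : ℕ) [Inhabited (Fin L)] : Fin L := (l.drop k).headI

-- ## The alternating-sum operator

def vecA (L : ℕ) (c : Fin L → ℂ) (t : Fin L) : ℂ := ∑ s ∈ Finset.univ.erase t, c s

lemma vecA_eq_neg {c : Fin L → ℂ} (hc : ∑ s, c s = 0) : vecA L c = fun t => -c t := by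
  funext t
  have : ∑ s ∈ Finset.univ.erase t, c s = (∑ s, c s) - c t := by
    rw [← Finset.sum_erase_add Finset.univ c (Finset.mem_univ t)]
    ring
  rw [vecA, this, hc]; ring

lemma sum_vecA (c : Fin L → ℂ) (hc : ∑ s, c s = 0) : ∑ t, vecA L c t = 0 := by
  rw [vecA_eq_neg hc]
  simpa using hc

def vec (L : ℕ) (d : ℕ) (c : Fin L → ℂ) : Fin L → ℂ := (vecA L)^[d] c

lemma vec_eq {d : ℕ} {c : Fin L → ℂ} (hc : ∑ s, c s = 0) :
    vec L d c = fun t => (-1)^d * c t := by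
  induction d with
  | zero => simp [vec]
  | succ d ih =>
    have hsum : ∑ s, vec L d c s = 0 := by
      rw [ih]; rw [← Finset.mul_sum, hc, mul_zero]
    have : vec L (d+1) c = vecA L (vec L d c) := Function.iterate_succ_apply' (vecA L) d c
    rw [this, vecA_eq_neg hsum, ih]
    funext t
    simp [pow_succ]

lemma vec_succ_eq_vec_vecA (d : ℕ) (c : Fin L → ℂ) :
    vec L (d+1) c = vec L d (vecA L c) := Function.iterate_succ_apply (vecA L) d c

-- head? of members of chainsF (n+1)

lemma head?_eq_headI [Inhabited (Fin L)] {l : List (Fin L)} (hl : l ≠ []) :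
    l.head? = some l.headI := by
  cases l with
  | nil => simp at hl
  | cons a t => rfl

lemma ne_nil_of_mem_chainsF {n : ℕ} {l : List (Fin L)} (h : l ∈ chainsF L (n+1)) : l ≠ [] := by
  intro hc
  subst hc
  simpa using (mem_chainsF.1 h).1

-- ## middle lemma

lemma middle_sum [Inhabited (Fin L)] (hL : 1 ≤ L) (d : ℕ) (c e : Fin L → ℂ) :
    ∑ u ∈ chainsF L (d+1), c u.headI * e (pos u d) = ∑ t, vec L d c t * e t := by
  induction d generalizing c with
  | zero =>
    rw [chainsF_succ_sum]
    have : ∀ i : Fin L, (chainsF L 0).filter (fun l => l.head? ≠ some i) = {[]} := by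
      intro i
      apply Finset.ext
      intro a
      simp [chainsF, Finset.mem_filter]
      rintro rfl
      simp
    simp only [this]
    simp [pos, vec]
  | succ d ih =>
    rw [chainsF_succ_sum]
    have step1 : ∀ i : Fin L,
        ∑ t ∈ (chainsF L (d+1)).filter (fun l => l.head? ≠ some i),
          c (i :: t).headI * e (pos (i :: t) (d+1))
        = ∑ t ∈ chainsF L (d+1),
            if t.head? ≠ some i then c i * e (pos t d) else 0 := by
      intro i
      rw [Finset.sum_filter]
      apply Finset.sum_congr rfl
      intro t _
      have hp : pos (L := L) (i :: t) (d+1) = pos t d := by simp [pos]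
      rw [hp]
      rfl
    simp only [step1]
    rw [Finset.sum_comm]
    have step2 : ∀ t ∈ chainsF L (d+1),
        (∑ i : Fin L, if t.head? ≠ some i then c i * e (pos t d) else 0)
        = vecA L c t.headI * e (pos t d) := by
      intro t ht
      have hne := ne_nil_of_mem_chainsF ht
      calc (∑ i : Fin L, if t.head? ≠ some i then c i * e (pos t d) else 0)
          = ∑ i ∈ Finset.univ.filter (fun i => t.head? ≠ some i), c i * e (pos t d) :=
            (Finset.sum_filter _ _).symm
        _ = ∑ i ∈ Finset.univ.erase t.headI, c i * e (pos t d) := by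
            apply Finset.sum_congr _ (fun _ _ => rfl)
            apply Finset.ext
            intro i
            simp [head?_eq_headI hne, ne_comm, eq_comm]
        _ = vecA L c t.headI * e (pos t d) := by rw [vecA, Finset.sum_mul]
    rw [Finset.sum_congr rfl step2, ih (vecA L c), ← vec_succ_eq_vec_vecA]

-- ## prefix/suffix stripping

lemma drop_sum [Inhabited (Fin L)] (hL : 1 ≤ L) (k m : ℕ) (hm : 1 ≤ m)
    (G : List (Fin L) → ℂ) :
    ∑ l ∈ chainsF L (k + m), G (l.drop k) = ((L : ℂ) - 1)^k * ∑ u ∈ chainsF L m, G u := by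
  induction k generalizing G with
  | zero => simp
  | succ k ih =>
    have hkm : k + 1 + m = (k + m) + 1 := by omega
    rw [hkm, chainsF_succ_sum]
    have step1 : ∀ i : Fin L,
        ∑ t ∈ (chainsF L (k + m)).filter (fun l => l.head? ≠ some i),
          G ((i :: t).drop (k + 1))
        = ∑ t ∈ chainsF L (k + m), if t.head? ≠ some i then G (t.drop k) else 0 := by
      intro i
      rw [Finset.sum_filter]
      apply Finset.sum_congr rfl
      intro t _
      rw [List.drop_succ_cons]
    simp only [step1]
    rw [Finset.sum_comm]
    have step2 : ∀ t ∈ chainsF L (k + m),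
        (∑ i : Fin L, if t.head? ≠ some i then G (t.drop k) else 0)
        = ((L : ℂ) - 1) * G (t.drop k) := by
      intro t ht
      have hne : t ≠ [] := by
        intro hc; subst hc
        have := (mem_chainsF.1 ht).1
        simp at this; omega
      rw [head?_eq_headI hne]
      have e1 : (∑ i : Fin L, if some t.headI ≠ some i then G (t.drop k) else 0)
          = ∑ i ∈ Finset.univ.filter (fun i : Fin L => some t.headI ≠ some i), G (t.drop k) :=
        (Finset.sum_filter _ _).symm
      have e2 : Finset.univ.filter (fun i : Fin L => some t.headI ≠ some i)
          = Finset.univ.erase t.headI := by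
        apply Finset.ext; intro i; simp [eq_comm]
      rw [e1, e2, Finset.sum_const, Finset.card_erase_of_mem (Finset.mem_univ _)]
      simp only [Finset.card_univ, Fintype.card_fin, nsmul_eq_mul]
      rw [Nat.cast_sub hL, Nat.cast_one]
    rw [Finset.sum_congr rfl step2, ← Finset.mul_sum, ih G]
    ring

lemma chainsF_reverse {n : ℕ} {l : List (Fin L)} (h : l ∈ chainsF L n) :
    l.reverse ∈ chainsF L n := by
  obtain ⟨h1, h2⟩ := mem_chainsF.1 h
  refine mem_chainsF.2 ⟨by simp [h1], ?_⟩
  show List.IsChain _ l.reverse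
  rw [List.isChain_reverse]
  have : (fun a b : Fin L => b ≠ a) = (fun a b : Fin L => a ≠ b) := by
    funext a b
    simp [flip, ne_comm]
  rw [this]
  exact h2

lemma take_sum [Inhabited (Fin L)] (hL : 1 ≤ L) (k m : ℕ) (hm : 1 ≤ m)
    (G : List (Fin L) → ℂ) :
    ∑ l ∈ chainsF L (m + k), G (l.take m) = ((L : ℂ) - 1)^k * ∑ u ∈ chainsF L m, G u := by
  have rev1 : ∑ l ∈ chainsF L (m + k), G (l.take m)
      = ∑ l ∈ chainsF L (m + k), G ((l.drop k).reverse) := by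
    apply Finset.sum_nbij' (fun l : List (Fin L) => l.reverse) (fun l : List (Fin L) => l.reverse)
    · intro l hl; exact chainsF_reverse hl
    · intro l hl; exact chainsF_reverse hl
    · intro l _; simp
    · intro l _; simp
    · intro l hl
      have hlen : l.length = m + k := (mem_chainsF.1 hl).1
      rw [List.drop_reverse, List.reverse_reverse, hlen]
      congr 2
      omega
  rw [rev1]
  rw [show m + k = k + m from by omega]
  rw [drop_sum hL k m hm (fun u => G u.reverse)]
  congr 1
  apply Finset.sum_nbij' (fun l : List (Fin L) => l.reverse) (fun l : List (Fin L) => l.reverse)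
  · intro l hl; exact chainsF_reverse hl
  · intro l hl; exact chainsF_reverse hl
  · intro l _; simp
  · intro l _; simp
  · intro l hl; rfl

-- ## main counting lemma

lemma counting [Inhabited (Fin L)] (hL : 1 ≤ L) (N i j : ℕ) (hij : i ≤ j) (hjN : j ≤ N)
    (c e : Fin L → ℂ) (hc : ∑ s, c s = 0) :
    ∑ l ∈ chainsF L (N+1), c (pos l i) * e (pos l j)
      = (-1)^(j-i) * ((L : ℂ) - 1)^(N-(j-i)) * ∑ t, c t * e t := by
  have h1 : ∀ l ∈ chainsF L (N+1), c (pos l i) * e (pos l j)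
      = c ((l.drop i).headI) * e (pos (l.drop i) (j - i)) := by
    intro l hl
    have hd : (l.drop i).drop (j - i) = l.drop j := by
      rw [List.drop_drop]
      congr 1
      omega
    simp only [pos, hd]
  rw [Finset.sum_congr rfl h1]
  rw [show N + 1 = i + (N + 1 - i) from by omega]
  rw [drop_sum hL i (N + 1 - i) (by omega) (fun u => c u.headI * e (pos u (j - i)))]
  have h2 : ∀ u ∈ chainsF L (N + 1 - i),
      c u.headI * e (pos u (j - i))
        = c ((u.take (j - i + 1)).headI) * e (pos (u.take (j - i + 1)) (j - i)) := by
    intro u hu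
    congr 2
    · cases u with
      | nil => rfl
      | cons a t =>
        rw [List.take_cons (by omega)]
        rfl
    · show (u.drop (j-i)).headI = ((u.take (j - i + 1)).drop (j-i)).headI
      rw [List.drop_take]
      cases hdrop : u.drop (j - i) with
      | nil => simp [hdrop]
      | cons a t =>
        simp [hdrop, show j - i + 1 - (j - i) = 1 from by omega]
  rw [Finset.sum_congr rfl h2]
  rw [show N + 1 - i = (j - i + 1) + (N - j) from by omega]
  rw [take_sum hL (N - j) (j - i + 1) (by omega)
    (fun u => c u.headI * e (pos u (j - i)))]
  rw [middle_sum hL (j - i) c e]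
  rw [vec_eq hc]
  have h3 : ∑ t, (fun t => (-1 : ℂ)^(j-i) * c t) t * e t
      = (-1 : ℂ)^(j-i) * ∑ t, c t * e t := by
    rw [Finset.mul_sum]
    apply Finset.sum_congr rfl
    intro t _
    ring
  rw [h3]
  have hpow : ((L:ℂ)-1)^i * ((L:ℂ)-1)^(N-j) = ((L:ℂ)-1)^(N-(j-i)) := by
    rw [← pow_add]
    congr 1
    omega
  rw [← hpow]
  ring

-- ## Hilbert space basics

lemma delta_eq [DecidableEq (W L)] (x : W L) : δ x = lp.single 2 x (1:ℂ) := by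
  unfold δ
  congr!

lemma inner_delta [DecidableEq (W L)] (v w : W L) :
    ⟪δ v, δ w⟫ = if v = w then (1:ℂ) else 0 := by
  rw [delta_eq, delta_eq]
  rw [lp.inner_single_left]
  have h1 : (lp.single 2 w (1:ℂ) : H L) v = if v = w then (1:ℂ) else 0 := by
    rw [lp.single_apply]
    simp [eq_comm, Pi.single_apply]
  rw [h1]
  split <;> simp

lemma delta_mem_V {w : W L} {l : ℕ} (h : len w = l) : δ w ∈ V L l :=
  Submodule.subset_span ⟨w, h, rfl⟩

def lowSub (L : ℕ) (b : ℕ) : Submodule ℂ (H L) :=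
  Submodule.span ℂ {x : H L | ∃ w : W L, len w < b ∧ x = δ w}

lemma delta_mem_lowSub {w : W L} {b : ℕ} (h : len w < b) : δ w ∈ lowSub L b :=
  Submodule.subset_span ⟨w, h, rfl⟩

lemma lowSub_mono {b b' : ℕ} (h : b ≤ b') : lowSub L b ≤ lowSub L b' := by
  apply Submodule.span_mono
  rintro x ⟨w, hw, rfl⟩
  exact ⟨w, lt_of_lt_of_le hw h, rfl⟩

lemma Q_eq_zero_of_lowSub (Q : ℕ → H L →L[ℂ] H L)
    (hQ : ∀ (l : ℕ) (w : W L), Q l (δ w) = if len w = l then δ w else 0)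
    {x : H L} {b k : ℕ} (hx : x ∈ lowSub L b) (hbk : b ≤ k) : Q k x = 0 := by
  have hle : lowSub L b ≤ LinearMap.ker (Q k : H L →ₗ[ℂ] H L) := by
    apply Submodule.span_le.2
    rintro x ⟨w, hw, rfl⟩
    rw [SetLike.mem_coe, LinearMap.mem_ker]
    show Q k (δ w) = 0
    rw [hQ k w, if_neg (by omega)]
  exact hle hx

lemma len_simple_mul_le (s : Fin L) (w : W L) : len (σ s * w) ≤ 1 + len w := by
  have h1 : (cs L).length (σ s) = 1 := (cs L).length_simple s
  have h2 := (cs L).length_mul_le (σ s) w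
  show (cs L).length (σ s * w) ≤ 1 + (cs L).length w
  omega

lemma len_mul_simple_le (s : Fin L) (w : W L) : len (w * σ s) ≤ len w + 1 := by
  have h1 : (cs L).length (σ s) = 1 := (cs L).length_simple s
  have h2 := (cs L).length_mul_le w (σ s)
  show (cs L).length (w * σ s) ≤ (cs L).length w + 1
  omega

lemma len_mul_le (u v : W L) : len (u * v) ≤ len u + len v := (cs L).length_mul_le u v

lemma T_map_lowSub (p : ℝ) (T : Fin L → H L →L[ℂ] H L)
    (hT : ∀ (s : Fin L) (w : W L),
      T s (δ w) = if len (σ s * w) < len w then δ (σ s * w) + (p : ℂ) • δ w else δ (σ s * w))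
    (s : Fin L) {b : ℕ} {x : H L} (hx : x ∈ lowSub L b) : T s x ∈ lowSub L (b + 1) := by
  have hle : lowSub L b ≤ Submodule.comap (T s : H L →ₗ[ℂ] H L) (lowSub L (b + 1)) := by
    apply Submodule.span_le.2
    rintro x ⟨w, hw, rfl⟩
    rw [SetLike.mem_coe, Submodule.mem_comap]
    show T s (δ w) ∈ lowSub L (b + 1)
    rw [hT s w]
    have h1 : δ (σ s * w) ∈ lowSub L (b + 1) :=
      delta_mem_lowSub (by have := len_simple_mul_le s w; omega)
    split
    · exact Submodule.add_mem _ h1 (Submodule.smul_mem _ _ (delta_mem_lowSub (by omega)))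
    · exact h1
  exact hle hx

lemma Tr_map_lowSub (p : ℝ) (Tr : Fin L → H L →L[ℂ] H L)
    (hTr : ∀ (s : Fin L) (w : W L),
      Tr s (δ w) = if len (w * σ s) < len w then δ (w * σ s) + (p : ℂ) • δ w else δ (w * σ s))
    (s : Fin L) {b : ℕ} {x : H L} (hx : x ∈ lowSub L b) : Tr s x ∈ lowSub L (b + 1) := by
  have hle : lowSub L b ≤ Submodule.comap (Tr s : H L →ₗ[ℂ] H L) (lowSub L (b + 1)) := by
    apply Submodule.span_le.2
    rintro x ⟨w, hw, rfl⟩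
    rw [SetLike.mem_coe, Submodule.mem_comap]
    show Tr s (δ w) ∈ lowSub L (b + 1)
    rw [hTr s w]
    have h1 : δ (w * σ s) ∈ lowSub L (b + 1) :=
      delta_mem_lowSub (by have := len_mul_simple_le s w; omega)
    split
    · exact Submodule.add_mem _ h1 (Submodule.smul_mem _ _ (delta_mem_lowSub (by omega)))
    · exact h1
  exact hle hx

-- ## sphere fintype and hn evaluation

def sphereEquiv (L n : ℕ) : {w : W L // len w = n} ≃ {l : List (Fin L) // l ∈ chainsF L n} where
  toFun w := ⟨ρ w.1, mem_chainsF.2 ⟨by rw [← len_eq_ρ_length, w.2], chain'_ρ w.1⟩⟩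
  invFun l := ⟨(cs L).wordProd l.1, by
    rcases mem_chainsF.1 l.2 with ⟨h1, h2⟩
    rw [len_wordProd_chain l.1 h2, h1]⟩
  left_inv w := Subtype.ext (wordProd_ρ w.1)
  right_inv l := Subtype.ext (ρ_wordProd_chain l.1 (mem_chainsF.1 l.2).2)

def sphereFintype (L n : ℕ) : Fintype {w : W L // len w = n} :=
  Fintype.ofEquiv _ (sphereEquiv L n).symm

lemma opsum_eval (A : ℕ → H L →L[ℂ] H L) (B : W L → H L →L[ℂ] H L)
    (hA : ∀ n : ℕ, A n = ∑' w : {w : W L // len w = n}, B (w : W L)) (n : ℕ) :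
    A n = ∑ l ∈ chainsF L n, B ((cs L).wordProd l) := by
  haveI := sphereFintype L n
  rw [hA n, tsum_fintype]
  rw [← Equiv.sum_comp (sphereEquiv L n).symm (fun w : {w : W L // len w = n} => B w.1)]
  rw [← Finset.sum_coe_sort (chainsF L n) (fun l => B ((cs L).wordProd l))]
  rfl

-- ## fueled lemmas on Tw

lemma len_eq_zero_iff {u : W L} : len u = 0 ↔ u = 1 := (cs L).length_eq_zero_iff

lemma Tw_map_lowSub (p : ℝ) (T : Fin L → H L →L[ℂ] H L)
    (hT : ∀ (s : Fin L) (w : W L),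
      T s (δ w) = if len (σ s * w) < len w then δ (σ s * w) + (p : ℂ) • δ w else δ (σ s * w))
    (Tw : W L → H L →L[ℂ] H L) (hTw1 : Tw 1 = 1)
    (hTwrec : ∀ (s : Fin L) (w : W L), len (σ s * w) < len w → Tw w = T s ∘L Tw (σ s * w)) :
    ∀ (n : ℕ) (u : W L), len u ≤ n → ∀ {b : ℕ} {x : H L}, x ∈ lowSub L b →
      Tw u x ∈ lowSub L (b + len u) := by
  intro n
  induction n with
  | zero =>
    intro u hu b x hx
    have h1 : u = 1 := len_eq_zero_iff.1 (by omega)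
    subst h1
    rw [hTw1]
    simpa [len_eq_zero_iff.2 rfl] using hx
  | succ n ih =>
    intro u hu b x hx
    by_cases h1 : u = 1
    · subst h1
      rw [hTw1]
      simpa [len_eq_zero_iff.2 rfl] using hx
    · obtain ⟨s, hs⟩ := (cs L).exists_leftDescent_of_ne_one h1
      have hs' : len (σ s * u) < len u := hs
      have hdich := (cs L).length_simple_mul u s
      have hlen : len (σ s * u) + 1 = len u := by
        rcases hdich with h | h
        · exfalso; have : len (σ s * u) = len u + 1 := h; omega
        · exact h
      rw [hTwrec s u hs']
      have hx2 : Tw (σ s * u) x ∈ lowSub L (b + len (σ s * u)) :=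
        ih (σ s * u) (by omega) hx
      have := T_map_lowSub p T hT s hx2
      rw [show b + len (σ s * u) + 1 = b + len u from by omega] at this
      exact this

lemma Tw_top (p : ℝ) (T : Fin L → H L →L[ℂ] H L)
    (hT : ∀ (s : Fin L) (w : W L),
      T s (δ w) = if len (σ s * w) < len w then δ (σ s * w) + (p : ℂ) • δ w else δ (σ s * w))
    (Tw : W L → H L →L[ℂ] H L) (hTw1 : Tw 1 = 1)
    (hTwrec : ∀ (s : Fin L) (w : W L), len (σ s * w) < len w → Tw w = T s ∘L Tw (σ s * w)) :
    ∀ (n : ℕ) (u : W L), len u ≤ n → ∀ y : W L,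
      Tw u (δ y) - (if len (u * y) = len u + len y then δ (u * y) else 0)
        ∈ lowSub L (len u + len y) := by
  intro n
  induction n with
  | zero =>
    intro u hu y
    have h1 : u = 1 := len_eq_zero_iff.1 (by omega)
    subst h1
    rw [hTw1, if_pos (by simp [len_eq_zero_iff.2 rfl])]
    simp
  | succ n ih =>
    intro u hu y
    by_cases h1 : u = 1
    · subst h1
      rw [hTw1, if_pos (by simp [len_eq_zero_iff.2 rfl])]
      simp
    · obtain ⟨s, hs⟩ := (cs L).exists_leftDescent_of_ne_one h1
      have hs' : len (σ s * u) < len u := hs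
      have hdich := (cs L).length_simple_mul u s
      have hlen : len (σ s * u) + 1 = len u := by
        rcases hdich with h | h
        · exfalso; have : len (σ s * u) = len u + 1 := h; omega
        · exact h
      set u' := σ s * u with hu'
      have huu : σ s * u' = u := by
        rw [hu', ← mul_assoc]
        have : σ s * σ s = 1 := (cs L).simple_mul_simple_self s
        rw [this, one_mul]
      have hassoc : σ s * (u' * y) = u * y := by rw [← mul_assoc, huu]
      rw [hTwrec s u hs']
      have IH := ih u' (by omega) y
      set A := (if len (u' * y) = len u' + len y then δ (u' * y) else 0) with hA
      set r := Tw u' (δ y) - A with hr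
      have hTwu' : Tw u' (δ y) = A + r := by rw [hr]; abel
      have hTr : T s r ∈ lowSub L (len u' + len y + 1) := T_map_lowSub p T hT s IH
      show T s (Tw u' (δ y)) - _ ∈ _
      rw [hTwu', map_add]
      by_cases hcase : len (u' * y) = len u' + len y
      · rw [hA, if_pos hcase]
        rw [hT s (u' * y), hassoc]
        have hdich2 := (cs L).length_simple_mul (u' * y) s
        have hdich2' : len (u * y) = len (u' * y) + 1 ∨ len (u * y) + 1 = len (u' * y) := by
          rcases hdich2 with h | h
          · left; rw [← hassoc]; exact h
          · right; rw [← hassoc]; exact h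
        rcases hdich2' with hup | hdown
        · rw [if_neg (by omega)]
          rw [if_pos (by omega)]
          have : δ (u * y) + T s r - δ (u * y) = T s r := by abel
          rw [this]
          rw [show len u + len y = len u' + len y + 1 from by omega]
          exact hTr
        · rw [if_pos (by omega)]
          rw [if_neg (by omega)]
          have : δ (u * y) + (p : ℂ) • δ (u' * y) + T s r - 0
              = δ (u * y) + ((p : ℂ) • δ (u' * y) + T s r) := by abel
          rw [this]
          refine Submodule.add_mem _ (delta_mem_lowSub (by omega)) ?_
          refine Submodule.add_mem _ (Submodule.smul_mem _ _ (delta_mem_lowSub (by omega))) ?_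
          exact lowSub_mono (by omega) hTr
      · rw [hA, if_neg hcase]
        have hle1 : len (u' * y) ≤ len u' + len y := len_mul_le u' y
        have hle2 : len (u * y) ≤ 1 + len (u' * y) := by
          rw [← hassoc]; exact len_simple_mul_le s (u' * y)
        rw [if_neg (by omega)]
        rw [map_zero, zero_add, sub_zero]
        exact lowSub_mono (by omega) hTr

lemma Twr_top (p : ℝ) (Tr : Fin L → H L →L[ℂ] H L)
    (hTr : ∀ (s : Fin L) (w : W L),
      Tr s (δ w) = if len (w * σ s) < len w then δ (w * σ s) + (p : ℂ) • δ w else δ (w * σ s))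
    (Twr : W L → H L →L[ℂ] H L) (hTwr1 : Twr 1 = 1)
    (hTwrrec : ∀ (s : Fin L) (w : W L), len (w * σ s) < len w → Twr w = Tr s ∘L Twr (w * σ s)) :
    ∀ (n : ℕ) (u : W L), len u ≤ n → ∀ y : W L,
      Twr u (δ y) - (if len (y * u) = len y + len u then δ (y * u) else 0)
        ∈ lowSub L (len y + len u) := by
  intro n
  induction n with
  | zero =>
    intro u hu y
    have h1 : u = 1 := len_eq_zero_iff.1 (by omega)
    subst h1
    rw [hTwr1, if_pos (by simp [len_eq_zero_iff.2 rfl])]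
    simp
  | succ n ih =>
    intro u hu y
    by_cases h1 : u = 1
    · subst h1
      rw [hTwr1, if_pos (by simp [len_eq_zero_iff.2 rfl])]
      simp
    · obtain ⟨s, hs⟩ := (cs L).exists_rightDescent_of_ne_one h1
      have hs' : len (u * σ s) < len u := hs
      have hdich := (cs L).length_mul_simple u s
      have hlen : len (u * σ s) + 1 = len u := by
        rcases hdich with h | h
        · exfalso; have : len (u * σ s) = len u + 1 := h; omega
        · exact h
      set u' := u * σ s with hu'
      have huu : u' * σ s = u := by
        rw [hu', mul_assoc]
        have : σ s * σ s = 1 := (cs L).simple_mul_simple_self s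
        rw [this, mul_one]
      have hassoc : (y * u') * σ s = y * u := by rw [mul_assoc, huu]
      rw [hTwrrec s u hs']
      have IH := ih u' (by omega) y
      set A := (if len (y * u') = len y + len u' then δ (y * u') else 0) with hA
      set r := Twr u' (δ y) - A with hr
      have hTwu' : Twr u' (δ y) = A + r := by rw [hr]; abel
      have hTrr : Tr s r ∈ lowSub L (len y + len u' + 1) := Tr_map_lowSub p Tr hTr s IH
      show Tr s (Twr u' (δ y)) - _ ∈ _
      rw [hTwu', map_add]
      by_cases hcase : len (y * u') = len y + len u'
      · rw [hA, if_pos hcase]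
        rw [hTr s (y * u'), hassoc]
        have hdich2 := (cs L).length_mul_simple (y * u') s
        have hdich2' : len (y * u) = len (y * u') + 1 ∨ len (y * u) + 1 = len (y * u') := by
          rcases hdich2 with h | h
          · left; rw [← hassoc]; exact h
          · right; rw [← hassoc]; exact h
        rcases hdich2' with hup | hdown
        · rw [if_neg (by omega)]
          rw [if_pos (by omega)]
          have : δ (y * u) + Tr s r - δ (y * u) = Tr s r := by abel
          rw [this]
          rw [show len y + len u = len y + len u' + 1 from by omega]
          exact hTrr
        · rw [if_pos (by omega)]
          rw [if_neg (by omega)]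
          have : δ (y * u) + (p : ℂ) • δ (y * u') + Tr s r - 0
              = δ (y * u) + ((p : ℂ) • δ (y * u') + Tr s r) := by abel
          rw [this]
          refine Submodule.add_mem _ (delta_mem_lowSub (by omega)) ?_
          refine Submodule.add_mem _ (Submodule.smul_mem _ _ (delta_mem_lowSub (by omega))) ?_
          exact lowSub_mono (by omega) hTrr
      · rw [hA, if_neg hcase]
        have hle1 : len (y * u') ≤ len y + len u' := len_mul_le y u'
        have hle2 : len (y * u) ≤ len (y * u') + 1 := by
          rw [← hassoc]; exact len_mul_simple_le s (y * u')
        rw [if_neg (by omega)]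
        rw [map_zero, zero_add, sub_zero]
        exact lowSub_mono (by omega) hTrr

-- ## reduced-word length criterion

lemma len_wordProd_lt (l : List (Fin L)) (h : ¬ l.Chain' (· ≠ ·)) :
    len ((cs L).wordProd l) < l.length := by
  induction l with
  | nil => exact absurd List.isChain_nil h
  | cons x t ih =>
    cases t with
    | nil => exact absurd (List.isChain_singleton x) h
    | cons y t' =>
      by_cases hxy : x = y
      · subst hxy
        have hprod : (cs L).wordProd (x :: x :: t') = (cs L).wordProd t' := by
          rw [CoxeterSystem.wordProd_cons, CoxeterSystem.wordProd_cons, ← mul_assoc,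
            (cs L).simple_mul_simple_self, one_mul]
        rw [hprod]
        have := (cs L).length_wordProd_le t'
        show (cs L).length ((cs L).wordProd t') < (x :: x :: t').length
        simp only [List.length_cons]
        omega
      · have hch : ¬ (y :: t').Chain' (· ≠ ·) := by
          intro hc
          exact h (List.isChain_cons_cons.2 ⟨hxy, hc⟩)
        have IH := ih hch
        have hle : len ((cs L).wordProd (x :: y :: t')) ≤ 1 + len ((cs L).wordProd (y :: t')) := by
          rw [CoxeterSystem.wordProd_cons]
          exact len_simple_mul_le x _
        simp only [List.length_cons] at IH ⊢
        omega

-- ## term evaluation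

lemma term_eval (p : ℝ)
    (T : Fin L → H L →L[ℂ] H L)
    (hT : ∀ (s : Fin L) (w : W L),
      T s (δ w) = if len (σ s * w) < len w then δ (σ s * w) + (p : ℂ) • δ w else δ (σ s * w))
    (Tw : W L → H L →L[ℂ] H L) (hTw1 : Tw 1 = 1)
    (hTwrec : ∀ (s : Fin L) (w : W L), len (σ s * w) < len w → Tw w = T s ∘L Tw (σ s * w))
    (Tr : Fin L → H L →L[ℂ] H L)
    (hTr : ∀ (s : Fin L) (w : W L),
      Tr s (δ w) = if len (w * σ s) < len w then δ (w * σ s) + (p : ℂ) • δ w else δ (w * σ s))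
    (Twr : W L → H L →L[ℂ] H L) (hTwr1 : Twr 1 = 1)
    (hTwrrec : ∀ (s : Fin L) (w : W L), len (w * σ s) < len w → Twr w = Tr s ∘L Twr (w * σ s))
    (Q : ℕ → H L →L[ℂ] H L)
    (hQ : ∀ (l : ℕ) (w : W L), Q l (δ w) = if len w = l then δ w else 0)
    (m n : ℕ) (s : Fin L) (a b : List (Fin L))
    (ha : a ∈ chainsF L m) (hb : b ∈ chainsF L n) :
    Q (m+n+1) (Tw ((cs L).wordProd a) (Twr ((cs L).wordProd b) (δ (σ s))))
      = if (a ++ s :: b) ∈ chainsF L (m+n+1)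
        then δ ((cs L).wordProd (a ++ s :: b)) else 0 := by
  obtain ⟨ha1, ha2⟩ := mem_chainsF.1 ha
  obtain ⟨hb1, hb2⟩ := mem_chainsF.1 hb
  set u := (cs L).wordProd a with hu
  set w := (cs L).wordProd b with hw
  have hlu : len u = m := by rw [hu, len_wordProd_chain a ha2, ha1]
  have hlw : len w = n := by rw [hw, len_wordProd_chain b hb2, hb1]
  have hσ : len (σ s) = 1 := len_simple s
  have H1 := Twr_top p Tr hTr Twr hTwr1 hTwrrec (len w) w le_rfl (σ s)
  set B := (if len (σ s * w) = len (σ s) + len w then δ (σ s * w) else 0) with hB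
  set r1 := Twr w (δ (σ s)) - B with hr1
  have hTwrw : Twr w (δ (σ s)) = B + r1 := by rw [hr1]; abel
  have hr1mem : r1 ∈ lowSub L (1 + n) := by
    rw [show (1:ℕ) + n = len (σ s) + len w from by omega]
    exact H1
  rw [hTwrw, map_add, map_add]
  have hQr1 : Q (m+n+1) (Tw u r1) = 0 := by
    have hmem := Tw_map_lowSub p T hT Tw hTw1 hTwrec (len u) u le_rfl hr1mem
    exact Q_eq_zero_of_lowSub Q hQ hmem (by omega)
  rw [hQr1, add_zero]
  have hπ : (cs L).wordProd (a ++ s :: b) = u * (σ s * w) := by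
    rw [CoxeterSystem.wordProd_append, CoxeterSystem.wordProd_cons]
    rfl
  have hlen_list : (a ++ s :: b).length = m+n+1 := by
    simp only [List.length_append, List.length_cons, ha1, hb1]
    omega
  have hmemiff : (a ++ s :: b) ∈ chainsF L (m+n+1) ↔ len (u * (σ s * w)) = m+n+1 := by
    rw [mem_chainsF]
    constructor
    · rintro ⟨-, hch⟩
      rw [← hπ, len_wordProd_chain _ hch, hlen_list]
    · intro hval
      refine ⟨hlen_list, ?_⟩
      by_contra hch
      have := len_wordProd_lt _ hch
      rw [hπ, hlen_list] at this
      omega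
  by_cases h2 : len (σ s * w) = len (σ s) + len w
  · rw [hB, if_pos h2]
    have H2 := Tw_top p T hT Tw hTw1 hTwrec (len u) u le_rfl (σ s * w)
    set C := (if len (u * (σ s * w)) = len u + len (σ s * w) then δ (u * (σ s * w)) else 0)
      with hC
    set r2 := Tw u (δ (σ s * w)) - C with hr2
    have hTwu : Tw u (δ (σ s * w)) = C + r2 := by rw [hr2]; abel
    rw [hTwu, map_add]
    have hQr2 : Q (m+n+1) r2 = 0 := Q_eq_zero_of_lowSub Q hQ H2 (by omega)
    rw [hQr2, add_zero]
    by_cases h3 : len (u * (σ s * w)) = len u + len (σ s * w)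
    · rw [hC, if_pos h3]
      rw [hQ _ _, if_pos (by omega)]
      rw [if_pos (hmemiff.2 (by omega)), hπ]
    · rw [hC, if_neg h3, map_zero]
      rw [if_neg (fun hmem => h3 (by have := hmemiff.1 hmem; omega))]
  · rw [hB, if_neg h2, map_zero, map_zero]
    have hle1 := len_mul_le u (σ s * w)
    have hle2 := len_simple_mul_le s w
    rw [if_neg (fun hmem => by
      have := hmemiff.1 hmem
      omega)]

-- ## the key formula

lemma key_formula [Inhabited (Fin L)] (p : ℝ)
    (T : Fin L → H L →L[ℂ] H L)
    (hT : ∀ (s : Fin L) (w : W L),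
      T s (δ w) = if len (σ s * w) < len w then δ (σ s * w) + (p : ℂ) • δ w else δ (σ s * w))
    (Tw : W L → H L →L[ℂ] H L) (hTw1 : Tw 1 = 1)
    (hTwrec : ∀ (s : Fin L) (w : W L), len (σ s * w) < len w → Tw w = T s ∘L Tw (σ s * w))
    (hn : ℕ → H L →L[ℂ] H L)
    (hhn : ∀ n : ℕ, hn n = ∑' w : {w : W L // len w = n}, Tw (w : W L))
    (Tr : Fin L → H L →L[ℂ] H L)
    (hTr : ∀ (s : Fin L) (w : W L),
      Tr s (δ w) = if len (w * σ s) < len w then δ (w * σ s) + (p : ℂ) • δ w else δ (w * σ s))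
    (Twr : W L → H L →L[ℂ] H L) (hTwr1 : Twr 1 = 1)
    (hTwrrec : ∀ (s : Fin L) (w : W L), len (w * σ s) < len w → Twr w = Tr s ∘L Twr (w * σ s))
    (hnr : ℕ → H L →L[ℂ] H L)
    (hhnr : ∀ n : ℕ, hnr n = ∑' w : {w : W L // len w = n}, Twr (w : W L))
    (Q : ℕ → H L →L[ℂ] H L)
    (hQ : ∀ (l : ℕ) (w : W L), Q l (δ w) = if len w = l then δ w else 0)
    (c : Fin L → ℂ) (m n : ℕ) :
    Q (m+n+1) (hn m (hnr n (∑ s, c s • δ (σ s))))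
      = ∑ l ∈ chainsF L (m+n+1), c (pos l m) • δ ((cs L).wordProd l) := by
  rw [opsum_eval hnr Twr hhnr n, opsum_eval hn Tw hhn m]
  simp only [ContinuousLinearMap.sum_apply]
  have inner_eq : ∀ b ∈ chainsF L n,
      Twr ((cs L).wordProd b) (∑ s, c s • δ (σ s))
        = ∑ s, c s • Twr ((cs L).wordProd b) (δ (σ s)) := by
    intro b _
    rw [map_sum]
    exact Finset.sum_congr rfl fun s _ => by rw [map_smul]
  have e2 : Q (m+n+1) (∑ a ∈ chainsF L m, Tw ((cs L).wordProd a)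
        (∑ b ∈ chainsF L n, Twr ((cs L).wordProd b) (∑ s, c s • δ (σ s))))
      = ∑ a ∈ chainsF L m, ∑ b ∈ chainsF L n, ∑ s : Fin L,
          c s • Q (m+n+1) (Tw ((cs L).wordProd a) (Twr ((cs L).wordProd b) (δ (σ s)))) := by
    rw [map_sum]
    apply Finset.sum_congr rfl
    intro a _
    rw [Finset.sum_congr rfl inner_eq, map_sum, map_sum]
    apply Finset.sum_congr rfl
    intro b _
    rw [map_sum, map_sum]
    apply Finset.sum_congr rfl
    intro s _
    rw [map_smul, map_smul]
  rw [e2]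
  have e3 : ∀ a ∈ chainsF L m, ∀ b ∈ chainsF L n, ∀ s : Fin L,
      c s • Q (m+n+1) (Tw ((cs L).wordProd a) (Twr ((cs L).wordProd b) (δ (σ s))))
        = if (a ++ s :: b) ∈ chainsF L (m+n+1)
          then c s • δ ((cs L).wordProd (a ++ s :: b)) else 0 := by
    intro a ha b hb s
    rw [term_eval p T hT Tw hTw1 hTwrec Tr hTr Twr hTwr1 hTwrrec Q hQ m n s a b ha hb]
    split
    · rfl
    · simp
  have e4 : ∑ a ∈ chainsF L m, ∑ b ∈ chainsF L n, ∑ s : Fin L,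
      c s • Q (m+n+1) (Tw ((cs L).wordProd a) (Twr ((cs L).wordProd b) (δ (σ s))))
      = ∑ a ∈ chainsF L m, ∑ b ∈ chainsF L n, ∑ s : Fin L,
        (if (a ++ s :: b) ∈ chainsF L (m+n+1)
          then c s • δ ((cs L).wordProd (a ++ s :: b)) else 0) := by
    apply Finset.sum_congr rfl
    intro a ha
    apply Finset.sum_congr rfl
    intro b hb
    apply Finset.sum_congr rfl
    intro s _
    exact e3 a ha b hb s
  rw [e4]
  -- flatten into a product sum
  rw [← Finset.sum_product']
  rw [← Finset.sum_product']
  -- now sum over ((a, b), s)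
  rw [← Finset.sum_filter]
  -- bijection
  apply Finset.sum_nbij'
    (fun x : (List (Fin L) × List (Fin L)) × Fin L => x.1.1 ++ x.2 :: x.1.2)
    (fun l : List (Fin L) => ((l.take m, l.drop (m+1)), pos l m))
  · rintro ⟨⟨a, b⟩, s⟩ hx
    exact (Finset.mem_filter.1 hx).2
  · intro l hl
    obtain ⟨hl1, hl2⟩ := mem_chainsF.1 hl
    have hmlt : m < l.length := by omega
    have hdropeq : l.drop m = pos l m :: l.drop (m+1) := by
      rw [List.drop_eq_getElem_cons hmlt]
      congr 1
      show l[m] = (l.drop m).headI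
      rw [List.drop_eq_getElem_cons hmlt]
      rfl
    have hrecon : l.take m ++ pos l m :: l.drop (m+1) = l := by
      conv_rhs => rw [← List.take_append_drop m l]
      rw [hdropeq]
    rw [Finset.mem_filter]
    constructor
    · rw [Finset.mem_product, Finset.mem_product]
      refine ⟨⟨?_, ?_⟩, Finset.mem_univ _⟩
      · exact mem_chainsF.2 ⟨by rw [List.length_take]; omega, hl2.take m⟩
      · exact mem_chainsF.2 ⟨by rw [List.length_drop]; omega, hl2.drop (m+1)⟩
    · show (l.take m ++ pos l m :: l.drop (m+1)) ∈ chainsF L (m+n+1)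
      rw [hrecon]
      exact hl
  · rintro ⟨⟨a, b⟩, s⟩ hx
    have hx' := Finset.mem_filter.1 hx
    have hmem := hx'.1
    rw [Finset.mem_product, Finset.mem_product] at hmem
    have ha1 := (mem_chainsF.1 hmem.1.1).1
    have htake : (a ++ s :: b).take m = a := List.take_left' ha1
    have hdropm : (a ++ s :: b).drop m = s :: b := List.drop_left' ha1
    have hdrop : (a ++ s :: b).drop (m+1) = b := by
      have heq : a ++ s :: b = (a ++ [s]) ++ b := by simp
      rw [heq, List.drop_left' (by simp [ha1])]
    have hpos : pos (a ++ s :: b) m = s := by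
      show ((a ++ s :: b).drop m).headI = s
      rw [hdropm]
      rfl
    show ((((a ++ s :: b).take m), ((a ++ s :: b).drop (m+1))), pos (a ++ s :: b) m) = ((a, b), s)
    rw [htake, hdrop, hpos]
  · intro l hl
    obtain ⟨hl1, hl2⟩ := mem_chainsF.1 hl
    have hmlt : m < l.length := by omega
    have hdropeq : l.drop m = pos l m :: l.drop (m+1) := by
      rw [List.drop_eq_getElem_cons hmlt]
      congr 1
      show l[m] = (l.drop m).headI
      rw [List.drop_eq_getElem_cons hmlt]
      rfl
    show l.take m ++ pos l m :: l.drop (m+1) = l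
    conv_rhs => rw [← List.take_append_drop m l]
    rw [hdropeq]
  · rintro ⟨⟨a, b⟩, s⟩ hx
    have hx' := Finset.mem_filter.1 hx
    have hmem := hx'.1
    rw [Finset.mem_product, Finset.mem_product] at hmem
    have ha1 := (mem_chainsF.1 hmem.1.1).1
    have hdropm : (a ++ s :: b).drop m = s :: b := List.drop_left' ha1
    have hpos : pos (a ++ s :: b) m = s := by
      show ((a ++ s :: b).drop m).headI = s
      rw [hdropm]
      rfl
    show c s • δ ((cs L).wordProd (a ++ s :: b))
        = c (pos (a ++ s :: b) m) • δ ((cs L).wordProd (a ++ s :: b))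
    rw [hpos]

-- ## inner products of key sums

lemma inner_comb_ne [Inhabited (Fin L)] [DecidableEq (W L)] (c c' : Fin L → ℂ)
    (N N' m m' : ℕ) (hNN' : N ≠ N') :
    ⟪∑ l ∈ chainsF L (N+1), c (pos l m) • δ ((cs L).wordProd l),
     ∑ l ∈ chainsF L (N'+1), c' (pos l m') • δ ((cs L).wordProd l)⟫ = (0 : ℂ) := by
  rw [sum_inner]
  apply Finset.sum_eq_zero
  intro l hl
  rw [inner_sum]
  apply Finset.sum_eq_zero
  intro l' hl'
  rw [inner_smul_left, inner_smul_right, inner_delta, if_neg, mul_zero, mul_zero]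
  intro hcontra
  have h1 : len ((cs L).wordProd l) = N + 1 := by
    obtain ⟨e1, e2⟩ := mem_chainsF.1 hl
    rw [len_wordProd_chain l e2, e1]
  have h2 : len ((cs L).wordProd l') = N' + 1 := by
    obtain ⟨e1, e2⟩ := mem_chainsF.1 hl'
    rw [len_wordProd_chain l' e2, e1]
  rw [hcontra, h2] at h1
  omega

lemma inner_comb_eq [Inhabited (Fin L)] [DecidableEq (W L)] (c c' : Fin L → ℂ)
    (N m m' : ℕ) :
    ⟪∑ l ∈ chainsF L (N+1), c (pos l m) • δ ((cs L).wordProd l),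
     ∑ l ∈ chainsF L (N+1), c' (pos l m') • δ ((cs L).wordProd l)⟫
    = ∑ l ∈ chainsF L (N+1), (starRingEnd ℂ) (c (pos l m)) * c' (pos l m') := by
  rw [sum_inner]
  apply Finset.sum_congr rfl
  intro l hl
  rw [inner_sum]
  rw [Finset.sum_eq_single l]
  · rw [inner_smul_left, inner_smul_right, inner_delta, if_pos rfl]
    ring
  · intro l' hl' hne
    rw [inner_smul_left, inner_smul_right, inner_delta, if_neg, mul_zero, mul_zero]
    intro hcontra
    exact hne (wordProd_chain_injOn (mem_chainsF.1 hl).2 (mem_chainsF.1 hl').2 hcontra).symm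
  · intro habs
    exact absurd hl habs


end Aux

theorem statement13
    (L : ℕ) (hL : 3 ≤ L) (q p : ℝ) (hq : 0 < q) (hq1 : q ≤ 1)
    (hp : p = (q - 1) / Real.sqrt q)
    (T : Fin L → H L →L[ℂ] H L)
    (hT : ∀ (s : Fin L) (w : W L),
      T s (δ w) =
        if len (σ s * w) < len w then δ (σ s * w) + (p : ℂ) • δ w else δ (σ s * w))
    (h : H L →L[ℂ] H L) (hh : h = ∑ s, T s)
    (Tw : W L → H L →L[ℂ] H L) (hTw1 : Tw 1 = 1)
    (hTwrec : ∀ (s : Fin L) (w : W L), len (σ s * w) < len w →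
      Tw w = T s ∘L Tw (σ s * w))
    (hn : ℕ → H L →L[ℂ] H L)
    (hhn : ∀ n : ℕ, hn n = ∑' w : {w : W L // len w = n}, Tw (w : W L))
    (Tr : Fin L → H L →L[ℂ] H L)
    (hTr : ∀ (s : Fin L) (w : W L),
      Tr s (δ w) =
        if len (w * σ s) < len w then δ (w * σ s) + (p : ℂ) • δ w else δ (w * σ s))
    (Rh : H L →L[ℂ] H L) (hRh : Rh = ∑ s, Tr s)
    (Twr : W L → H L →L[ℂ] H L) (hTwr1 : Twr 1 = 1)
    (hTwrrec : ∀ (s : Fin L) (w : W L), len (w * σ s) < len w →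
      Twr w = Tr s ∘L Twr (w * σ s))
    (hnr : ℕ → H L →L[ℂ] H L)
    (hhnr : ∀ n : ℕ, hnr n = ∑' w : {w : W L // len w = n}, Twr (w : W L))
    (Q : ℕ → H L →L[ℂ] H L)
    (hQ : ∀ (l : ℕ) (w : W L), Q l (δ w) = if len w = l then δ w else 0)
    (β : H L)
    (hβmem : β ∈ V L 1)
    (hβperp : ∀ y ∈ Sl L Q h Rh 1, ⟪β, y⟫ = 0)
    (β' : H L)
    (hβ'mem : β' ∈ V L 1)
    (hβ'perp : ∀ y ∈ Sl L Q h Rh 1, ⟪β', y⟫ = 0)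
    (m n m' n' : ℕ) :
    (m + n ≠ m' + n' →
      ⟪Q (m + n + 1) (hn m (hnr n β)), Q (m' + n' + 1) (hn m' (hnr n' β'))⟫ = 0)
    ∧ (m + n = m' + n' →
      ⟪Q (m + n + 1) (hn m (hnr n β)), Q (m' + n' + 1) (hn m' (hnr n' β'))⟫ =
        (((-1 : ℂ) ^ ((n : ℤ) - (n' : ℤ)).natAbs) *
          ((L : ℂ) - 1) ^ (m + n - ((n : ℤ) - (n' : ℤ)).natAbs)) * ⟪β, β'⟫) := by
  classical
  letI : Inhabited (Fin L) := ⟨⟨0, by omega⟩⟩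
  have hL1 : 1 ≤ L := by omega
  -- coefficients for β and β'
  have hVeq : {x : H L | ∃ w : W L, len w = 1 ∧ x = δ w}
      = Set.range (fun s : Fin L => δ (σ s)) := by
    ext x
    constructor
    · rintro ⟨w, hw, rfl⟩
      obtain ⟨i, rfl⟩ := (cs L).length_eq_one_iff.1 hw
      exact ⟨i, rfl⟩
    · rintro ⟨i, rfl⟩
      exact ⟨σ i, len_simple i, rfl⟩
  have hβmem' : β ∈ Submodule.span ℂ (Set.range fun s : Fin L => δ (σ s)) := by
    rw [← hVeq]; exact hβmem
  have hβ'mem' : β' ∈ Submodule.span ℂ (Set.range fun s : Fin L => δ (σ s)) := by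
    rw [← hVeq]; exact hβ'mem
  obtain ⟨c, hc⟩ := (Submodule.mem_span_range_iff_exists_fun ℂ).1 hβmem'
  obtain ⟨c', hc'⟩ := (Submodule.mem_span_range_iff_exists_fun ℂ).1 hβ'mem'
  -- the generator of S_1
  have hTs1 : ∀ s : Fin L, T s (δ (1 : W L)) = δ (σ s) := by
    intro s
    rw [hT s 1, mul_one, if_neg]
    have h1 : len (σ s) = 1 := len_simple s
    have h2 : len (1 : W L) = 0 := (cs L).length_one
    omega
  have hgen : (∑ s, δ (σ s : W L)) = Q 1 (h (δ (1 : W L))) := by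
    have e0 : h (δ (1 : W L)) = ∑ s, δ (σ s) := by
      rw [hh, ContinuousLinearMap.sum_apply]
      exact Finset.sum_congr rfl fun s _ => hTs1 s
    rw [e0, map_sum]
    exact (Finset.sum_congr rfl fun s _ => by
      rw [hQ 1 (σ s), if_pos (len_simple s)]).symm
  have hSl : (∑ s, δ (σ s : W L)) ∈ Sl L Q h Rh 1 :=
    Submodule.subset_span (Or.inl ⟨δ (1 : W L), delta_mem_V ((cs L).length_one), hgen⟩)
  -- coefficient sums vanish
  have inner_e1 : ∀ (f : Fin L → ℂ) (s : Fin L),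
      ⟪∑ t, f t • δ (σ t), δ (σ s)⟫ = (starRingEnd ℂ) (f s) := by
    intro f s
    rw [sum_inner, Finset.sum_eq_single s]
    · rw [inner_smul_left, inner_delta, if_pos rfl, mul_one]
    · intro t _ hts
      rw [inner_smul_left, inner_delta, if_neg (fun hcon => hts (σ_injective hcon)), mul_zero]
    · intro habs; exact absurd (Finset.mem_univ s) habs
  have hconjsum : ∑ s, (starRingEnd ℂ) (c s) = 0 := by
    have hp0 := hβperp _ hSl
    rw [← hc, inner_sum] at hp0
    rw [Finset.sum_congr rfl (fun s _ => inner_e1 c s)] at hp0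
    exact hp0
  have hconj'sum : ∑ s, (starRingEnd ℂ) (c' s) = 0 := by
    have hp0 := hβ'perp _ hSl
    rw [← hc', inner_sum] at hp0
    rw [Finset.sum_congr rfl (fun s _ => inner_e1 c' s)] at hp0
    exact hp0
  have hc'sum : ∑ s, c' s = 0 := by
    have hmap := congrArg (starRingEnd ℂ) hconj'sum
    rw [map_sum, map_zero] at hmap
    simpa using hmap
  -- inner product of β and β'
  have hββ' : ⟪β, β'⟫ = ∑ s, (starRingEnd ℂ) (c s) * c' s := by
    rw [← hc, ← hc', sum_inner]
    apply Finset.sum_congr rfl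
    intro s _
    rw [inner_sum, Finset.sum_eq_single s]
    · rw [inner_smul_left, inner_smul_right, inner_delta, if_pos rfl]
      ring
    · intro t _ hts
      rw [inner_smul_left, inner_smul_right, inner_delta,
        if_neg (fun hcon => hts (σ_injective hcon).symm), mul_zero, mul_zero]
    · intro habs; exact absurd (Finset.mem_univ s) habs
  -- key formulas
  have K1 : Q (m+n+1) (hn m (hnr n β))
      = ∑ l ∈ chainsF L (m+n+1), c (pos l m) • δ ((cs L).wordProd l) := by
    rw [← hc]
    exact key_formula p T hT Tw hTw1 hTwrec hn hhn Tr hTr Twr hTwr1 hTwrrec hnr hhnr Q hQ c m n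
  have K2 : Q (m'+n'+1) (hn m' (hnr n' β'))
      = ∑ l ∈ chainsF L (m'+n'+1), c' (pos l m') • δ ((cs L).wordProd l) := by
    rw [← hc']
    exact key_formula p T hT Tw hTw1 hTwrec hn hhn Tr hTr Twr hTwr1 hTwrrec hnr hhnr Q hQ c' m' n'
  constructor
  · intro hne
    rw [K1, K2]
    exact inner_comb_ne c c' (m+n) (m'+n') m m' hne
  · intro heq
    rw [K1, K2]
    have hrw : m' + n' = m + n := heq.symm
    rw [hrw]
    rw [inner_comb_eq c c' (m+n) m m']
    rw [hββ']
    set d := ((n:ℤ) - (n':ℤ)).natAbs with hd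
    rcases le_or_gt m m' with hmm | hmm
    · have hdm : m' - m = d := by omega
      rw [counting hL1 (m+n) m m' hmm (by omega) (fun s => (starRingEnd ℂ) (c s)) c' hconjsum]
      rw [hdm]
    · have hdm : m - m' = d := by omega
      rw [Finset.sum_congr rfl
        (fun l (_ : l ∈ chainsF L (m+n+1)) =>
          mul_comm ((starRingEnd ℂ) (c (pos l m))) (c' (pos l m')))]
      rw [counting hL1 (m+n) m' m (by omega) (by omega) c'
        (fun s => (starRingEnd ℂ) (c s)) hc'sum]
      rw [hdm]
      rw [Finset.sum_congr rfl
        (fun t (_ : t ∈ (Finset.univ : Finset (Fin L))) =>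
          mul_comm (c' t) ((starRingEnd ℂ) (c t)))]

end UCoxMasa
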